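/- Let E be a vector space, p a seminorm on E, and F a subspace of E such that F ∩ ker p has infinite codimension in ker p (where codimension is in ker p). If E₀ is a subspace of finite codimension in E, then E₀ ∩ ker p is not contained in F. Consequently, if X is a Fréchet space with seminorms (p_j) such that ker p_{j+1} has infinite codimension in ker p_j, then every closed finite-codimensional subspace E of X contains a vector x with p_j(x) = 0 and p_{j+1}(x) > 0. -/

import Mathlib

/-- The kernel `{x | p x = 0}` of a seminorm, as a submodule. -/
def Seminorm.kerSubmodule {X : Type*} [AddCommGroup X] [Module ℝ X]
    (p : Seminorm ℝ X) : Submodule ℝ X where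
  carrier := {x | p x = 0}
  zero_mem' := map_zero p
  add_mem' := by
    intro a b ha hb
    simp only [Set.mem_setOf_eq] at ha hb ⊢
    refine le_antisymm ?_ (apply_nonneg p _)
    calc p (a + b) ≤ p a + p b := map_add_le_add p a b
      _ = 0 := by rw [ha, hb, add_zero]
  smul_mem' := by
    intro c x hx
    simp only [Set.mem_setOf_eq] at hx ⊢
    rw [map_smul_eq_mul, hx, mul_zero]

/-- (i) If `F ∩ ker p` has infinite codimension in `ker p` and
`E₀` has finite codimension in `E`, then `E₀ ∩ ker p ⊄ F`.  (ii) Consequently,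
in a Fréchet space where `ker p_{j+1}` has infinite codimension in `ker p_j`,
every closed finite-codimensional subspace `E` contains an `x` with
`p_j x = 0` and `p_{j+1} x > 0`. -/
private lemma part1 : ∀ (E : Type) (_ : AddCommGroup E), ∀ (_ : Module ℝ E)
      (p : Seminorm ℝ E) (F E₀ : Submodule ℝ E),
      ¬ FiniteDimensional ℝ
        (↥p.kerSubmodule ⧸ ((F ⊓ p.kerSubmodule).comap p.kerSubmodule.subtype)) →
      FiniteDimensional ℝ (E ⧸ E₀) →
      ¬ (E₀ ⊓ p.kerSubmodule ≤ F) := by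
  intro E _ _ p F E₀ hinf hfd hle
  apply hinf
  set K := p.kerSubmodule with hK
  have hker : LinearMap.ker (E₀.mkQ ∘ₗ K.subtype) = (E₀ ⊓ K).comap K.subtype := by
    ext x
    simp only [LinearMap.mem_ker, LinearMap.comp_apply, Submodule.mkQ_apply,
      Submodule.Quotient.mk_eq_zero, Submodule.mem_comap, Submodule.mem_inf,
      Submodule.subtype_apply]
    exact ⟨fun h => ⟨h, x.2⟩, fun h => h.1⟩
  have h1 : FiniteDimensional ℝ (K ⧸ (E₀ ⊓ K).comap K.subtype) := by
    rw [← hker]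
    exact (LinearMap.quotKerEquivRange (E₀.mkQ ∘ₗ K.subtype)).symm.finiteDimensional
  have h' : (E₀ ⊓ K).comap K.subtype ≤ (F ⊓ K).comap K.subtype :=
    Submodule.comap_mono (le_inf hle inf_le_right)
  let f : (K ⧸ (E₀ ⊓ K).comap K.subtype) →ₗ[ℝ] (K ⧸ (F ⊓ K).comap K.subtype) :=
    Submodule.mapQ _ _ LinearMap.id (by simpa using h')
  have hs : Function.Surjective f := by
    intro y
    obtain ⟨x, rfl⟩ := Submodule.Quotient.mk_surjective _ y
    exact ⟨Submodule.Quotient.mk x, rfl⟩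
  exact Module.Finite.of_surjective f hs

set_option maxHeartbeats 1000000 in
theorem stmt_12 :
    (∀ (E : Type) (_ : AddCommGroup E), ∀ (_ : Module ℝ E)
      (p : Seminorm ℝ E) (F E₀ : Submodule ℝ E),
      ¬ FiniteDimensional ℝ
        (↥p.kerSubmodule ⧸ ((F ⊓ p.kerSubmodule).comap p.kerSubmodule.subtype)) →
      FiniteDimensional ℝ (E ⧸ E₀) →
      ¬ (E₀ ⊓ p.kerSubmodule ≤ F)) ∧
    (∀ (X : Type) (_ : AddCommGroup X), ∀ (_ : Module ℝ X),
      ∀ (_ : UniformSpace X), ∀ (_ : IsUniformAddGroup X) (_ : CompleteSpace X)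
        (_ : ContinuousSMul ℝ X)
        (p : SeminormFamily ℝ X ℕ), WithSeminorms p → Monotone p →
      (∀ x : X, x ≠ 0 → ∃ j, p j x ≠ 0) →
      (∀ j : ℕ, ¬ FiniteDimensional ℝ
        (↥((p j).kerSubmodule) ⧸
          ((p (j + 1)).kerSubmodule.comap ((p j).kerSubmodule).subtype))) →
      ∀ j : ℕ, ∀ E : Submodule ℝ X, IsClosed (E : Set X) →
        FiniteDimensional ℝ (X ⧸ E) →
        ∃ x ∈ E, p j x = 0 ∧ 0 < p (j + 1) x) := by
  refine ⟨part1, ?_⟩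
  intro X iX mX _ _ _ _ p hws hmono hsep hinf j E hclosed hfd
  have hker_le : ∀ x : X, p (j + 1) x = 0 → p j x = 0 := by
    intro x hx
    have h1 : p j x ≤ p (j + 1) x := hmono (Nat.le_succ j) x
    exact le_antisymm (hx ▸ h1) (apply_nonneg _ _)
  have heq : ((p (j + 1)).kerSubmodule ⊓ (p j).kerSubmodule).comap
        (p j).kerSubmodule.subtype
      = (p (j + 1)).kerSubmodule.comap (p j).kerSubmodule.subtype := by
    ext x
    simp only [Submodule.mem_comap, Submodule.mem_inf]
    exact ⟨fun h => h.1, fun h => ⟨h, x.2⟩⟩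
  have hinf' : ¬ FiniteDimensional ℝ
      (↥((p j).kerSubmodule) ⧸
        (((p (j + 1)).kerSubmodule ⊓ (p j).kerSubmodule).comap
          (p j).kerSubmodule.subtype)) := by
    rw [heq]; exact hinf j
  have key := part1 X iX mX (p j) (p (j + 1)).kerSubmodule E hinf' hfd
  rw [SetLike.not_le_iff_exists] at key
  obtain ⟨x, hx, hnx⟩ := key
  rw [Submodule.mem_inf] at hx
  refine ⟨x, hx.1, hx.2, ?_⟩
  exact lt_of_le_of_ne (apply_nonneg _ _) (Ne.symm hnx)
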